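/- Let C be a compact convex body in the Euclidean plane and let α ∈ (0, π). Then there exists a cap of C with angle α that is isosceles: there exist an exterior point S and two supporting lines of C through S touching C at points P and Q respectively, such that the angle of the cap at S equals α and |SP| = |SQ|. -/

import Mathlib

open Real Set
open scoped RealInnerProductSpace
noncomputable section
abbrev E2 := EuclideanSpace ℝ (Fin 2)

def uv (θ : ℝ) : E2 := (WithLp.equiv 2 (Fin 2 → ℝ)).symm ![Real.cos θ, Real.sin θ]
def uw (θ : ℝ) : E2 := (WithLp.equiv 2 (Fin 2 → ℝ)).symm ![-Real.sin θ, Real.cos θ]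

lemma inner_uv_uv (a b : ℝ) : ⟪uv a, uv b⟫ = Real.cos (b - a) := by
  simp [uv, PiLp.inner_apply, Fin.sum_univ_two, RCLike.inner_apply, Real.cos_sub]

lemma inner_uw_uv (a b : ℝ) : ⟪uw a, uv b⟫ = Real.sin (b - a) := by
  simp [uv, uw, PiLp.inner_apply, Fin.sum_univ_two, RCLike.inner_apply, Real.sin_sub]
  ring

lemma inner_uw_uw (a b : ℝ) : ⟪uw a, uw b⟫ = Real.cos (b - a) := by
  simp [uw, PiLp.inner_apply, Fin.sum_univ_two, RCLike.inner_apply, Real.cos_sub]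
  ring

lemma inner_uv_uw (a b : ℝ) : ⟪uv a, uw b⟫ = - Real.sin (b - a) := by
  rw [real_inner_comm, inner_uw_uv, show a - b = -(b-a) by ring, Real.sin_neg]

lemma norm_uv (a : ℝ) : ‖uv a‖ = 1 := by
  have h1 : ⟪uv a, uv a⟫ = 1 := by rw [inner_uv_uv]; simp
  have h2 := real_inner_self_eq_norm_mul_norm (uv a)
  nlinarith [norm_nonneg (uv a)]

lemma norm_uw (a : ℝ) : ‖uw a‖ = 1 := by
  have h1 : ⟪uw a, uw a⟫ = 1 := by rw [inner_uw_uw]; simp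
  have h2 := real_inner_self_eq_norm_mul_norm (uw a)
  nlinarith [norm_nonneg (uw a)]

lemma decomp (θ : ℝ) (x : E2) : x = ⟪uv θ, x⟫ • uv θ + ⟪uw θ, x⟫ • uw θ := by
  have hc := Real.sin_sq_add_cos_sq θ
  have h0 : ⟪uv θ, x⟫ = Real.cos θ * x 0 + Real.sin θ * x 1 := by
    simp [uv, PiLp.inner_apply, Fin.sum_univ_two, RCLike.inner_apply]
    ring
  have h1 : ⟪uw θ, x⟫ = -Real.sin θ * x 0 + Real.cos θ * x 1 := by
    simp [uw, PiLp.inner_apply, Fin.sum_univ_two, RCLike.inner_apply]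
    ring
  ext i
  have happ : ∀ (c d : ℝ) (j : Fin 2), (c • uv θ + d • uw θ) j = c * uv θ j + d * uw θ j := by
    intro c d j; rfl
  rw [h0, h1, happ]
  fin_cases i
  · show x 0 = _
    simp [uv, uw]
    linear_combination (-(x 0)) * hc
  · show x 1 = _
    simp [uv, uw]
    linear_combination (-(x 1)) * hc

lemma uv_periodic (θ : ℝ) : uv (θ + 2*π) = uv θ := by
  unfold uv
  norm_num [Real.cos_add_two_pi, Real.sin_add_two_pi]

lemma norm_uv_sub_le (a b : ℝ) : ‖uv a - uv b‖ ≤ |a - b| := by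
  have h : ‖uv a - uv b‖^2 = 2 - 2 * Real.cos (a - b) := by
    rw [norm_sub_sq_real, inner_uv_uv]
    have := norm_uv a; have := norm_uv b
    rw [show b - a = -(a-b) by ring, Real.cos_neg]
    nlinarith
  have h2 : 2 - 2*Real.cos (a-b) ≤ (a-b)^2 := by
    nlinarith [Real.one_sub_sq_div_two_le_cos (x := a-b)]
  have := abs_nonneg (a-b)
  nlinarith [norm_nonneg (uv a - uv b), sq_abs (a-b)]



section Defs
variable (C : Set E2)
def hS (θ : ℝ) : ℝ := sSup ((fun x => ⟪uv θ, x⟫) '' C)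
def faceF (θ : ℝ) : Set E2 := {x | x ∈ C ∧ ⟪uv θ, x⟫ = hS C θ}
def sXf (θ : ℝ) : ℝ := sInf ((fun x => ⟪uw θ, x⟫) '' faceF C θ)
def sYf (θ : ℝ) : ℝ := sSup ((fun x => ⟪uw θ, x⟫) '' faceF C θ)
def bb (α θ : ℝ) : ℝ := (hS C (θ+α) - hS C θ * Real.cos α)/Real.sin α
def dd (α θ : ℝ) : ℝ := (hS C (θ+α) * Real.cos α - hS C θ)/Real.sin α
def SSp (α θ : ℝ) : E2 := hS C θ • uv θ + bb C α θ • uw θ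
end Defs

lemma cont_inner (v : E2) : Continuous (fun x : E2 => ⟪v, x⟫) :=
  continuous_const.inner continuous_id

section Basic
variable {C : Set E2} (hcomp : IsCompact C) (hne : C.Nonempty)
include hcomp hne

omit hne in
lemma hS_le {θ : ℝ} {x : E2} (hx : x ∈ C) : ⟪uv θ, x⟫ ≤ hS C θ :=
  le_csSup ((hcomp.image (cont_inner _)).bddAbove) ⟨x, hx, rfl⟩

lemma hS_mem (θ : ℝ) : ∃ x ∈ C, ⟪uv θ, x⟫ = hS C θ := by
  obtain ⟨x, hx, hmax⟩ := hcomp.exists_isMaxOn hne ((cont_inner (uv θ)).continuousOn)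
  refine ⟨x, hx, le_antisymm (hS_le hcomp hx) (csSup_le (hne.image _) ?_)⟩
  rintro b ⟨y, hy, rfl⟩; exact hmax hy

omit hcomp hne in
lemma faceF_subset {θ : ℝ} : faceF C θ ⊆ C := fun _ hx => hx.1

lemma faceF_nonempty (θ : ℝ) : (faceF C θ).Nonempty := by
  obtain ⟨x, hx, he⟩ := hS_mem hcomp hne θ; exact ⟨x, hx, he⟩

omit hne in
lemma faceF_compact (θ : ℝ) : IsCompact (faceF C θ) := by
  refine hcomp.of_isClosed_subset ?_ (faceF_subset (C := C))
  exact hcomp.isClosed.inter ((isClosed_singleton (x := hS C θ)).preimage (cont_inner (uv θ)))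

lemma sXf_le {θ : ℝ} {x : E2} (hx : x ∈ faceF C θ) : sXf C θ ≤ ⟪uw θ, x⟫ :=
  csInf_le (((faceF_compact hcomp θ).image (cont_inner _)).bddBelow) ⟨x, hx, rfl⟩

lemma le_sYf {θ : ℝ} {x : E2} (hx : x ∈ faceF C θ) : ⟪uw θ, x⟫ ≤ sYf C θ :=
  le_csSup (((faceF_compact hcomp θ).image (cont_inner _)).bddAbove) ⟨x, hx, rfl⟩

lemma sXf_mem (θ : ℝ) : ∃ x ∈ faceF C θ, ⟪uw θ, x⟫ = sXf C θ := by
  obtain ⟨x, hx, hmin⟩ := (faceF_compact hcomp θ).exists_isMinOn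
    (faceF_nonempty hcomp hne θ) ((cont_inner (uw θ)).continuousOn)
  refine ⟨x, hx, le_antisymm ?_ (sXf_le hcomp hne hx)⟩
  refine le_csInf ((faceF_nonempty hcomp hne θ).image _) ?_
  rintro b ⟨y, hy, rfl⟩; exact hmin hy

lemma sYf_mem (θ : ℝ) : ∃ x ∈ faceF C θ, ⟪uw θ, x⟫ = sYf C θ := by
  obtain ⟨x, hx, hmax⟩ := (faceF_compact hcomp θ).exists_isMaxOn
    (faceF_nonempty hcomp hne θ) ((cont_inner (uw θ)).continuousOn)
  refine ⟨x, hx, le_antisymm (le_sYf hcomp hne hx) ?_⟩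
  refine csSup_le ((faceF_nonempty hcomp hne θ).image _) ?_
  rintro b ⟨y, hy, rfl⟩; exact hmax hy

lemma sXf_le_sYf (θ : ℝ) : sXf C θ ≤ sYf C θ := by
  obtain ⟨x, hx, he⟩ := sXf_mem hcomp hne θ
  exact he ▸ le_sYf hcomp hne hx

end Basic

lemma exists_face_coord {C : Set E2} (hcomp : IsCompact C) (hconv : Convex ℝ C)
    (hne : C.Nonempty) {θ p : ℝ} (h1 : sXf C θ ≤ p) (h2 : p ≤ sYf C θ) :
    ∃ P ∈ faceF C θ, ⟪uw θ, P⟫ = p := by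
  have hfconv : Convex ℝ (faceF C θ) := by
    have : faceF C θ = C ∩ {x | ⟪uv θ, x⟫ = hS C θ} := rfl
    rw [this]
    exact hconv.inter (convex_hyperplane (𝕜 := ℝ) (⟨fun x y => inner_add_right _ _ _, fun c x => real_inner_smul_right _ _ _⟩ : IsLinearMap ℝ fun x : E2 => ⟪uv θ, x⟫) (hS C θ))
  have himg : Convex ℝ ((fun x => ⟪uw θ, x⟫) '' faceF C θ) := by
    refine hfconv.is_linear_image ⟨fun x y => inner_add_right _ _ _, fun c x => real_inner_smul_right _ _ _⟩
  obtain ⟨X, hX, heX⟩ := sXf_mem hcomp hne θ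
  obtain ⟨Y, hY, heY⟩ := sYf_mem hcomp hne θ
  have hmem : p ∈ Icc ((fun x => ⟪uw θ, x⟫) X) ((fun x => ⟪uw θ, x⟫) Y) := by
    simp only [heX, heY]; exact ⟨h1, h2⟩
  obtain ⟨P, hP, heP⟩ := himg.ordConnected.out ⟨X, hX, rfl⟩ ⟨Y, hY, rfl⟩ hmem
  exact ⟨P, hP, heP⟩

section Ident
variable {C : Set E2} (hcomp : IsCompact C) (hne : C.Nonempty)
include hcomp hne

omit hne in
lemma abs_hS_le {R : ℝ} (hR : ∀ x ∈ C, ‖x‖ ≤ R) (hneC : C.Nonempty) (θ : ℝ) :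
    |hS C θ| ≤ R := by
  obtain ⟨x, hx, he⟩ := hS_mem hcomp hneC θ
  rw [← he]
  calc |⟪uv θ, x⟫| ≤ ‖uv θ‖ * ‖x‖ := abs_real_inner_le_norm _ _
  _ ≤ R := by rw [norm_uv]; simpa using hR x hx

lemma hS_lip {R : ℝ} (hR : ∀ x ∈ C, ‖x‖ ≤ R) (a b : ℝ) :
    |hS C a - hS C b| ≤ R * |a - b| := by
  have key : ∀ s t : ℝ, hS C s - hS C t ≤ R * |s - t| := by
    intro s t
    obtain ⟨x, hx, he⟩ := hS_mem hcomp hne s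
    have h1 : ⟪uv t, x⟫ ≤ hS C t := hS_le hcomp hx
    have h2 : ⟪uv s, x⟫ - ⟪uv t, x⟫ ≤ R * |s - t| := by
      rw [← inner_sub_left]
      calc ⟪uv s - uv t, x⟫ ≤ ‖uv s - uv t‖ * ‖x‖ := real_inner_le_norm _ _
      _ ≤ |s - t| * R := by
          have h3 := norm_uv_sub_le s t
          have h4 := hR x hx
          have h5 : (0:ℝ) ≤ ‖uv s - uv t‖ := norm_nonneg _
          nlinarith [norm_nonneg x]
      _ = R * |s - t| := mul_comm _ _
    linarith [he ▸ h2]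
  rcases abs_sub_le_iff.2 ⟨key a b, by rw [abs_sub_comm]; exact key b a⟩ with h
  exact h

omit hne in
lemma mem_face_decomp {θ : ℝ} {x : E2} (hx : x ∈ faceF C θ) :
    x = hS C θ • uv θ + ⟪uw θ, x⟫ • uw θ := by
  conv_lhs => rw [decomp θ x]
  rw [hx.2]

omit hne in
lemma support_pair {θ ψ : ℝ} {x : E2} (hx : x ∈ faceF C θ) :
    hS C θ * Real.cos (ψ - θ) + ⟪uw θ, x⟫ * Real.sin (ψ - θ) ≤ hS C ψ := by
  have h1 : ⟪uv ψ, x⟫ ≤ hS C ψ := hS_le hcomp hx.1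
  have h2 : ⟪uv ψ, x⟫ = hS C θ * Real.cos (ψ - θ) + ⟪uw θ, x⟫ * Real.sin (ψ - θ) := by
    conv_lhs => rw [mem_face_decomp hcomp hx]
    rw [inner_add_right, real_inner_smul_right, real_inner_smul_right, inner_uv_uv, inner_uv_uw,
      show θ - ψ = -(ψ - θ) by ring, Real.cos_neg, Real.sin_neg]
    ring
  linarith [h2 ▸ h1]

lemma sYf_le_bound {θ δ : ℝ} (hδ1 : 0 < δ) (hδ2 : δ < π) :
    sYf C θ ≤ (hS C (θ+δ) - hS C θ * Real.cos δ)/Real.sin δ := by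
  have hs : 0 < Real.sin δ := Real.sin_pos_of_pos_of_lt_pi hδ1 hδ2
  obtain ⟨Y, hY, heY⟩ := sYf_mem hcomp hne θ
  have := support_pair hcomp (ψ := θ + δ) hY
  rw [show θ + δ - θ = δ by ring, heY] at this
  rw [le_div_iff₀ hs]
  linarith

lemma sXf_ge_bound {θ δ : ℝ} (hδ1 : 0 < δ) (hδ2 : δ < π) :
    (hS C θ * Real.cos δ - hS C (θ-δ))/Real.sin δ ≤ sXf C θ := by
  have hs : 0 < Real.sin δ := Real.sin_pos_of_pos_of_lt_pi hδ1 hδ2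
  obtain ⟨X, hX, heX⟩ := sXf_mem hcomp hne θ
  have := support_pair hcomp (ψ := θ - δ) hX
  rw [show θ - δ - θ = -δ by ring, Real.cos_neg, Real.sin_neg, heX] at this
  rw [div_le_iff₀ hs]
  linarith

end Ident

section SIdent
variable {C : Set E2} {α : ℝ} (hα1 : 0 < α) (hα2 : α < π)
include hα1 hα2

lemma sin_alpha_pos : 0 < Real.sin α := Real.sin_pos_of_pos_of_lt_pi hα1 hα2


omit hα1 hα2 in
lemma inner_uv_SSp (θ : ℝ) : ⟪uv θ, SSp C α θ⟫ = hS C θ := by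
  unfold SSp
  rw [inner_add_right, real_inner_smul_right, real_inner_smul_right, inner_uv_uv, inner_uv_uw]
  simp

lemma inner_uvα_SSp (θ : ℝ) : ⟪uv (θ+α), SSp C α θ⟫ = hS C (θ+α) := by
  have hs := sin_alpha_pos hα1 hα2
  unfold SSp bb
  rw [inner_add_right, real_inner_smul_right, real_inner_smul_right, inner_uv_uv, inner_uv_uw,
    show θ - (θ + α) = -α by ring, Real.cos_neg, Real.sin_neg]
  field_simp
  ring

omit hα1 hα2 in
lemma inner_uw_SSp (θ : ℝ) : ⟪uw θ, SSp C α θ⟫ = bb C α θ := by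
  unfold SSp
  rw [inner_add_right, real_inner_smul_right, real_inner_smul_right, inner_uw_uv, inner_uw_uw]
  simp

lemma inner_uwα_SSp (θ : ℝ) : ⟪uw (θ+α), SSp C α θ⟫ = dd C α θ := by
  have hs := sin_alpha_pos hα1 hα2
  unfold SSp bb dd
  rw [inner_add_right, real_inner_smul_right, real_inner_smul_right, inner_uw_uv, inner_uw_uw,
    show θ - (θ + α) = -α by ring, Real.sin_neg, Real.cos_neg]
  field_simp
  linear_combination (-(hS C θ)) * (Real.sin_sq_add_cos_sq α)

end SIdent

lemma uv_add_uv (x y : ℝ) : uv (x - y) + uv (x + y) = (2 * Real.cos y) • uv x := by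
  ext i
  have h : ∀ (j : Fin 2), (uv (x-y) + uv (x+y)) j = uv (x-y) j + uv (x+y) j := fun _ => rfl
  have h2 : ∀ (j : Fin 2), ((2 * Real.cos y) • uv x) j = (2 * Real.cos y) * uv x j := fun _ => rfl
  rw [h, h2]
  fin_cases i <;>
    simp [uv, Real.cos_sub, Real.cos_add, Real.sin_sub, Real.sin_add] <;> ring

lemma uv_between (β1 β β2 : ℝ) :
    Real.sin (β2-β1) • uv β = Real.sin (β2-β) • uv β1 + Real.sin (β-β1) • uv β2 := by
  ext i
  have h : ∀ (j : Fin 2), (Real.sin (β2-β) • uv β1 + Real.sin (β-β1) • uv β2) j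
      = Real.sin (β2-β) * uv β1 j + Real.sin (β-β1) * uv β2 j := fun _ => rfl
  have h2 : ∀ (j : Fin 2), (Real.sin (β2-β1) • uv β) j = Real.sin (β2-β1) * uv β j := fun _ => rfl
  rw [h, h2]
  fin_cases i <;>
    simp [uv, Real.cos_sub, Real.cos_add, Real.sin_sub, Real.sin_add] <;> ring

section Cone
variable {C : Set E2} (hcomp : IsCompact C) (hne : C.Nonempty)
include hcomp hne

lemma mem_face_between {β1 β β2 : ℝ} {z : E2} (h1 : z ∈ faceF C β1) (h2 : z ∈ faceF C β2)
    (hb1 : β1 ≤ β) (hb2 : β ≤ β2) (hwidth : β2 - β1 < π) : z ∈ faceF C β := by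
  rcases eq_or_lt_of_le hb1 with rfl | hb1'
  · exact h1
  rcases eq_or_lt_of_le hb2 with rfl | hb2'
  · exact h2
  have hs0 : 0 < Real.sin (β2 - β1) :=
    Real.sin_pos_of_pos_of_lt_pi (by linarith) hwidth
  have hs1 : 0 ≤ Real.sin (β2 - β) :=
    Real.sin_nonneg_of_nonneg_of_le_pi (by linarith) (by linarith)
  have hs2 : 0 ≤ Real.sin (β - β1) :=
    Real.sin_nonneg_of_nonneg_of_le_pi (by linarith) (by linarith)
  refine ⟨h1.1, le_antisymm (hS_le hcomp h1.1) ?_⟩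
  refine csSup_le (hne.image _) ?_
  rintro v ⟨x, hx, rfl⟩
  have key : ∀ w : E2, Real.sin (β2-β1) * ⟪uv β, w⟫
      = Real.sin (β2-β) * ⟪uv β1, w⟫ + Real.sin (β-β1) * ⟪uv β2, w⟫ := by
    intro w
    have h' := congrArg (fun v : E2 => ⟪v, w⟫) (uv_between β1 β β2)
    simp only [inner_add_left, real_inner_smul_left] at h'
    linear_combination h'
  have hx1 : ⟪uv β1, x⟫ ≤ ⟪uv β1, z⟫ := h1.2 ▸ hS_le hcomp hx
  have hx2 : ⟪uv β2, x⟫ ≤ ⟪uv β2, z⟫ := h2.2 ▸ hS_le hcomp hx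
  have hkx := key x
  have hkz := key z
  nlinarith [hkx, hkz, mul_le_mul_of_nonneg_left hx1 hs1, mul_le_mul_of_nonneg_left hx2 hs2]

omit hne in
lemma face_unique {β1 β2 : ℝ} {z z' : E2} (h1 : z ∈ faceF C β1) (h2 : z ∈ faceF C β2)
    (h1' : z' ∈ faceF C β1) (h2' : z' ∈ faceF C β2)
    (hw1 : 0 < β2 - β1) (hw2 : β2 - β1 < π) : z = z' := by
  have hs0 : Real.sin (β2 - β1) ≠ 0 :=
    (Real.sin_pos_of_pos_of_lt_pi hw1 hw2).ne'
  have e1 : ⟪uv β1, z - z'⟫ = 0 := by rw [inner_sub_right, h1.2, h1'.2, sub_self]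
  have e2 : ⟪uv β2, z - z'⟫ = 0 := by rw [inner_sub_right, h2.2, h2'.2, sub_self]
  have hd := decomp β1 (z - z')
  rw [e1, zero_smul, zero_add] at hd
  have e3 : ⟪uv β2, z - z'⟫ = ⟪uw β1, z - z'⟫ * Real.sin (β2 - β1) := by
    conv_lhs => rw [hd]
    rw [real_inner_smul_right, inner_uv_uw, show β1 - β2 = -(β2-β1) by ring, Real.sin_neg]
    ring
  have h0 : ⟪uw β1, z - z'⟫ * Real.sin (β2 - β1) = 0 := by rw [← e3]; exact e2
  have : ⟪uw β1, z - z'⟫ = 0 := by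
    rcases mul_eq_zero.1 h0 with h | h
    · exact h
    · exact absurd h hs0
  have : z - z' = 0 := by rw [hd, this, zero_smul]
  exact sub_eq_zero.1 this

end Cone

section Memb
variable {C : Set E2} {α : ℝ} (hcomp : IsCompact C) (hconv : Convex ℝ C) (hne : C.Nonempty)
  (hα1 : 0 < α) (hα2 : α < π)

include hcomp hconv hne hα1 hα2

omit hconv in
lemma bb_ge_sXf (θ : ℝ) : sXf C θ ≤ bb C α θ := by
  have hs := sin_alpha_pos hα1 hα2
  obtain ⟨X, hX, heX⟩ := sXf_mem hcomp hne θ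
  have := support_pair hcomp (ψ := θ + α) hX
  rw [show θ + α - θ = α by ring, heX] at this
  unfold bb; rw [le_div_iff₀ hs]; linarith

omit hconv in
lemma dd_le_sYf (θ : ℝ) : dd C α θ ≤ sYf C (θ+α) := by
  have hs := sin_alpha_pos hα1 hα2
  obtain ⟨Y, hY, heY⟩ := sYf_mem hcomp hne (θ+α)
  have := support_pair hcomp (ψ := θ) hY
  rw [show θ - (θ+α) = -α by ring, Real.cos_neg, Real.sin_neg, heY] at this
  unfold dd; rw [div_le_iff₀ hs]; linarith

omit hconv in
lemma SSp_mem_faceθ {θ : ℝ} (h : SSp C α θ ∈ C) : SSp C α θ ∈ faceF C θ :=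
  ⟨h, inner_uv_SSp θ⟩

omit hconv in
lemma SSp_mem_faceα {θ : ℝ} (h : SSp C α θ ∈ C) : SSp C α θ ∈ faceF C (θ+α) :=
  ⟨h, inner_uvα_SSp hα1 hα2 θ⟩

lemma SSp_mem_iff {θ : ℝ} : SSp C α θ ∈ C ↔ bb C α θ ≤ sYf C θ := by
  constructor
  · intro h
    have := le_sYf hcomp hne (SSp_mem_faceθ hcomp hne hα1 hα2 h)
    rwa [inner_uw_SSp] at this
  · intro h
    obtain ⟨P, hP, heP⟩ := exists_face_coord hcomp hconv hne (bb_ge_sXf hcomp hne hα1 hα2 θ) h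
    have : P = SSp C α θ := by
      rw [mem_face_decomp hcomp hP, heP]; rfl
    exact this ▸ hP.1

lemma dd_lt_sXf_of_not_mem {θ : ℝ} (h : SSp C α θ ∉ C) : dd C α θ < sXf C (θ+α) := by
  by_contra hcon
  push_neg at hcon
  obtain ⟨Q, hQ, heQ⟩ := exists_face_coord hcomp hconv hne hcon (dd_le_sYf hcomp hne hα1 hα2 θ)
  have : Q = SSp C α θ := by
    rw [mem_face_decomp hcomp hQ, heQ]
    conv_rhs => rw [decomp (θ+α) (SSp C α θ)]
    rw [inner_uvα_SSp hα1 hα2, inner_uwα_SSp hα1 hα2]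
  exact h (this ▸ hQ.1)

end Memb

def Gq (C : Set E2) (α θ : ℝ) : ℝ := (bb C α θ - sYf C θ) - (sYf C (θ+α) - dd C α θ)
def Gq' (C : Set E2) (α θ : ℝ) : ℝ := (sXf C (θ+α) - dd C α θ) - (bb C α θ - sXf C θ)

section Tangent
variable {C : Set E2} {α : ℝ} (hcomp : IsCompact C) (hne : C.Nonempty)
  (hα1 : 0 < α) (hα2 : α < π)
include hcomp hα1 hα2

lemma tangent_I {θ : ℝ} {z Y' : E2} (hz : z ∈ faceF C θ) (hY : Y' ∈ faceF C (θ+α)) :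
    (bb C α θ - ⟪uw θ, z⟫) * Real.sin α = ⟪uv (θ+α), Y' - z⟫ := by
  have hs := sin_alpha_pos hα1 hα2
  have hz2 : ⟪uv (θ+α), z⟫ = hS C θ * Real.cos α + ⟪uw θ, z⟫ * Real.sin α := by
    conv_lhs => rw [mem_face_decomp hcomp hz]
    rw [inner_add_right, real_inner_smul_right, real_inner_smul_right, inner_uv_uv, inner_uv_uw,
      show θ - (θ+α) = -α by ring, Real.cos_neg, Real.sin_neg]
    ring
  rw [inner_sub_right, hY.2, hz2]
  unfold bb
  field_simp
  ring

lemma tangent_II {θ : ℝ} {z Y' : E2} (hz : z ∈ faceF C θ) (hY : Y' ∈ faceF C (θ+α)) :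
    (⟪uw (θ+α), Y'⟫ - dd C α θ) * Real.sin α = ⟪uv θ, z - Y'⟫ := by
  have hs := sin_alpha_pos hα1 hα2
  have hY2 : ⟪uv θ, Y'⟫ = hS C (θ+α) * Real.cos α - ⟪uw (θ+α), Y'⟫ * Real.sin α := by
    conv_lhs => rw [mem_face_decomp hcomp hY]
    rw [inner_add_right, real_inner_smul_right, real_inner_smul_right, inner_uv_uv, inner_uv_uw,
      show θ + α - θ = α by ring]
    ring
  rw [inner_sub_right, hz.2, hY2]
  unfold dd
  field_simp
  ring

lemma inner_sum_double {θ : ℝ} (w : E2) :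
    ⟪uv θ, w⟫ + ⟪uv (θ+α), w⟫ = (2 * Real.cos (α/2)) * ⟪uv (θ+α/2), w⟫ := by
  have e := uv_add_uv (θ+α/2) (α/2)
  rw [show (θ+α/2) - (α/2) = θ by ring, show (θ+α/2) + (α/2) = θ + α by ring] at e
  have h' := congrArg (fun v : E2 => ⟪v, w⟫) e
  simp only [inner_add_left, real_inner_smul_left] at h'
  linear_combination h'

include hne

lemma L1 {θ2 θ : ℝ} (hD : SSp C α θ2 ∈ C) (h1 : θ2 ≤ θ) (h2 : θ ≤ θ2 + α/2) :
    Gq C α θ ≤ 0 := by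
  have hs := sin_alpha_pos hα1 hα2
  have hcos : 0 < Real.cos (α/2) :=
    Real.cos_pos_of_mem_Ioo ⟨by linarith, by linarith⟩
  set z := SSp C α θ2 with hzdef
  have hz1 : z ∈ faceF C θ2 := SSp_mem_faceθ hcomp hne hα1 hα2 hD
  have hz2 : z ∈ faceF C (θ2+α) := SSp_mem_faceα hcomp hne hα1 hα2 hD
  have hzθ : z ∈ faceF C θ :=
    mem_face_between hcomp hne hz1 hz2 h1 (by linarith) (by linarith)
  have hzβ : z ∈ faceF C (θ+α/2) :=
    mem_face_between hcomp hne hz1 hz2 (by linarith) (by linarith) (by linarith)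
  obtain ⟨Y', hY', heY'⟩ := sYf_mem hcomp hne (θ+α)
  have key1 := tangent_I hcomp hα1 hα2 hzθ hY'
  have key2 := tangent_II hcomp hα1 hα2 hzθ hY'
  have hsupp : ⟪uv (θ+α/2), Y'⟫ ≤ ⟪uv (θ+α/2), z⟫ := hzβ.2 ▸ hS_le hcomp hY'.1
  have hcomb := inner_sum_double (α := α) hcomp hα1 hα2 (θ := θ) (Y' - z)
  have hzY : ⟪uv θ, z - Y'⟫ = - ⟪uv θ, Y' - z⟫ := by
    rw [← inner_neg_right, neg_sub]
  have hβneg : ⟪uv (θ+α/2), Y' - z⟫ ≤ 0 := by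
    rw [inner_sub_right]; linarith
  have hle : sYf C θ ≥ ⟪uw θ, z⟫ := le_sYf hcomp hne hzθ
  have hmul : (Gq C α θ) * Real.sin α ≤ 0 := by
    have expand : Gq C α θ ≤ (bb C α θ - ⟪uw θ, z⟫) - (⟪uw (θ+α), Y'⟫ - dd C α θ) := by
      unfold Gq; rw [heY']; linarith
    have e2 : ((bb C α θ - ⟪uw θ, z⟫) - (⟪uw (θ+α), Y'⟫ - dd C α θ)) * Real.sin α
        = (2 * Real.cos (α/2)) * ⟪uv (θ+α/2), Y' - z⟫ := by
      rw [sub_mul, key1, key2, hzY]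
      linarith [hcomb]
    nlinarith [mul_le_mul_of_nonneg_right expand (le_of_lt hs), e2,
      mul_nonpos_of_nonneg_of_nonpos (by positivity : (0:ℝ) ≤ 2 * Real.cos (α/2)) hβneg]
  nlinarith [hmul, hs]

lemma L2 {θ3 θ : ℝ} (hD : SSp C α θ3 ∈ C) (h1 : θ3 - α/2 ≤ θ) (h2 : θ ≤ θ3) :
    Gq' C α θ ≤ 0 := by
  have hs := sin_alpha_pos hα1 hα2
  have hcos : 0 < Real.cos (α/2) :=
    Real.cos_pos_of_mem_Ioo ⟨by linarith, by linarith⟩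
  set z := SSp C α θ3 with hzdef
  have hz1 : z ∈ faceF C θ3 := SSp_mem_faceθ hcomp hne hα1 hα2 hD
  have hz2 : z ∈ faceF C (θ3+α) := SSp_mem_faceα hcomp hne hα1 hα2 hD
  have hzθα : z ∈ faceF C (θ+α) :=
    mem_face_between hcomp hne hz1 hz2 (by linarith) (by linarith) (by linarith)
  have hzβ : z ∈ faceF C (θ+α/2) :=
    mem_face_between hcomp hne hz1 hz2 (by linarith) (by linarith) (by linarith)
  obtain ⟨X, hX, heX⟩ := sXf_mem hcomp hne θ
  have key1 := tangent_I hcomp hα1 hα2 hX hzθα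
  have key2 := tangent_II hcomp hα1 hα2 hX hzθα
  have hsupp : ⟪uv (θ+α/2), X⟫ ≤ ⟪uv (θ+α/2), z⟫ := hzβ.2 ▸ hS_le hcomp hX.1
  have hcomb := inner_sum_double (α := α) hcomp hα1 hα2 (θ := θ) (X - z)
  have hβneg : ⟪uv (θ+α/2), X - z⟫ ≤ 0 := by
    rw [inner_sub_right]; linarith
  have hzX : ⟪uv (θ+α), z - X⟫ = - ⟪uv (θ+α), X - z⟫ := by
    rw [← inner_neg_right, neg_sub]
  have hle : sXf C (θ+α) ≤ ⟪uw (θ+α), z⟫ := sXf_le hcomp hne hzθα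
  have hmul : (Gq' C α θ) * Real.sin α ≤ 0 := by
    have expand : Gq' C α θ ≤ (⟪uw (θ+α), z⟫ - dd C α θ) - (bb C α θ - ⟪uw θ, X⟫) := by
      unfold Gq'; rw [heX]; linarith
    have e2 : ((⟪uw (θ+α), z⟫ - dd C α θ) - (bb C α θ - ⟪uw θ, X⟫)) * Real.sin α
        = (2 * Real.cos (α/2)) * ⟪uv (θ+α/2), X - z⟫ := by
      rw [sub_mul, key1, key2, hzX]
      linarith [hcomb]
    nlinarith [mul_le_mul_of_nonneg_right expand (le_of_lt hs), e2,
      mul_nonpos_of_nonneg_of_nonpos (by positivity : (0:ℝ) ≤ 2 * Real.cos (α/2)) hβneg]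
  nlinarith [hmul, hs]

end Tangent

section Periodic
variable (C : Set E2) (α : ℝ)

lemma uw_periodic (θ : ℝ) : uw (θ + 2*π) = uw θ := by
  unfold uw
  norm_num [Real.cos_add_two_pi, Real.sin_add_two_pi]

lemma hS_per (θ : ℝ) : hS C (θ + 2*π) = hS C θ := by
  unfold hS; rw [uv_periodic]

lemma faceF_per (θ : ℝ) : faceF C (θ + 2*π) = faceF C θ := by
  unfold faceF; rw [uv_periodic, hS_per]

lemma sXf_per (θ : ℝ) : sXf C (θ + 2*π) = sXf C θ := by
  unfold sXf; rw [uw_periodic, faceF_per]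

lemma sYf_per (θ : ℝ) : sYf C (θ + 2*π) = sYf C θ := by
  unfold sYf; rw [uw_periodic, faceF_per]

lemma bb_per (θ : ℝ) : bb C α (θ + 2*π) = bb C α θ := by
  unfold bb; rw [show θ + 2*π + α = (θ + α) + 2*π by ring, hS_per, hS_per]

lemma dd_per (θ : ℝ) : dd C α (θ + 2*π) = dd C α θ := by
  unfold dd; rw [show θ + 2*π + α = (θ + α) + 2*π by ring, hS_per, hS_per]

lemma SSp_per (θ : ℝ) : SSp C α (θ + 2*π) = SSp C α θ := by
  unfold SSp; rw [hS_per, bb_per, uv_periodic, uw_periodic]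

lemma Gq_per (θ : ℝ) : Gq C α (θ + 2*π) = Gq C α θ := by
  unfold Gq
  rw [show θ + 2*π + α = (θ + α) + 2*π by ring, bb_per, dd_per, sYf_per, sYf_per]

lemma Gq'_per (θ : ℝ) : Gq' C α (θ + 2*π) = Gq' C α θ := by
  unfold Gq'
  rw [show θ + 2*π + α = (θ + α) + 2*π by ring, bb_per, dd_per, sXf_per, sXf_per]

end Periodic

lemma exists_bound {C : Set E2} (hcomp : IsCompact C) : ∃ R : ℝ, 0 ≤ R ∧ ∀ x ∈ C, ‖x‖ ≤ R := by
  obtain ⟨R, hR⟩ := hcomp.isBounded.subset_closedBall 0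
  exact ⟨max R 0, le_max_right _ _, fun x hx =>
    le_trans (by simpa [Metric.mem_closedBall, dist_eq_norm] using hR hx) (le_max_left _ _)⟩

lemma uv_cont : Continuous uv := by
  unfold uv
  refine (PiLp.continuous_toLp _ _).comp ?_
  refine continuous_pi fun i => ?_
  fin_cases i
  · simpa using Real.continuous_cos
  · simpa using Real.continuous_sin

lemma uw_cont : Continuous uw := by
  unfold uw
  refine (PiLp.continuous_toLp _ _).comp ?_
  refine continuous_pi fun i => ?_
  fin_cases i
  · simp; exact Real.continuous_sin.neg
  · simpa using Real.continuous_cos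

section Cont
variable {C : Set E2} (hcomp : IsCompact C) (hne : C.Nonempty)
include hcomp hne

lemma hS_cont : Continuous (hS C) := by
  obtain ⟨R, hR0, hR⟩ := exists_bound hcomp
  refine (LipschitzWith.of_dist_le_mul (K := R.toNNReal) fun a b => ?_).continuous
  rw [Real.dist_eq, Real.dist_eq]
  calc |hS C a - hS C b| ≤ R * |a - b| := hS_lip hcomp hne hR a b
  _ ≤ R.toNNReal * |a - b| := by
      have : (R : ℝ) ≤ R.toNNReal := Real.le_coe_toNNReal R
      have := abs_nonneg (a - b)
      nlinarith [Real.le_coe_toNNReal R]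

lemma SSp_cont {α : ℝ} : Continuous (SSp C α) := by
  unfold SSp bb
  refine Continuous.add (Continuous.smul (hS_cont hcomp hne) uv_cont) (Continuous.smul (?_ : Continuous fun θ => (hS C (θ + α) - hS C θ * Real.cos α) / Real.sin α) uw_cont)
  exact (((hS_cont hcomp hne).comp (continuous_id.add continuous_const)).sub
    ((hS_cont hcomp hne).mul continuous_const)).div_const _

lemma sYf_usc (θ : ℝ) {ε : ℝ} (hε : 0 < ε) :
    ∃ δ > 0, ∀ θ', |θ' - θ| < δ → sYf C θ' < sYf C θ + ε := by
  by_contra hcon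
  push_neg at hcon
  have hseq : ∀ n : ℕ, ∃ t : ℝ, |t - θ| < 1/(n+1) ∧ sYf C θ + ε ≤ sYf C t := by
    intro n
    obtain ⟨t, ht1, ht2⟩ := hcon (1/(n+1)) (by positivity)
    exact ⟨t, ht1, ht2⟩
  choose f hf1 hf2 using hseq
  have hg : ∀ n : ℕ, ∃ y ∈ faceF C (f n), ⟪uw (f n), y⟫ = sYf C (f n) := fun n =>
    sYf_mem hcomp hne (f n)
  choose g hg1 hg2 using hg
  obtain ⟨y, hyC, φ, hφ, hconv⟩ := hcomp.tendsto_subseq (fun n => (hg1 n).1)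
  have hftends : Filter.Tendsto (fun n => f (φ n)) Filter.atTop (nhds θ) := by
    rw [Metric.tendsto_atTop]
    intro δ hδ
    obtain ⟨N, hN⟩ := exists_nat_gt (1/δ)
    refine ⟨N, fun n hn => ?_⟩
    rw [Real.dist_eq]
    calc |f (φ n) - θ| < 1/(φ n + 1) := hf1 _
    _ ≤ 1/(N + 1) := by
        apply one_div_le_one_div_of_le (by positivity)
        have h1 : (n : ℝ) ≤ φ n := by exact_mod_cast (hφ.le_apply)
        have h2 : (N : ℝ) ≤ n := by exact_mod_cast hn
        linarith
    _ < δ := by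
        rw [div_lt_iff₀ (by positivity)]
        have hδ' : 0 < (N:ℝ) + 1 := by positivity
        rw [div_lt_iff₀ hδ] at hN
        nlinarith
  have hyface : y ∈ faceF C θ := by
    refine ⟨hyC, ?_⟩
    have t1 : Filter.Tendsto (fun n => ⟪uv (f (φ n)), g (φ n)⟫) Filter.atTop (nhds ⟪uv θ, y⟫) :=
      Filter.Tendsto.inner ((uv_cont.tendsto θ).comp hftends) hconv
    have t2 : Filter.Tendsto (fun n => ⟪uv (f (φ n)), g (φ n)⟫) Filter.atTop (nhds (hS C θ)) := by
      have : (fun n => ⟪uv (f (φ n)), g (φ n)⟫) = fun n => hS C (f (φ n)) := by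
        funext n; exact (hg1 (φ n)).2
      rw [this]
      exact ((hS_cont hcomp hne).tendsto θ).comp hftends
    exact tendsto_nhds_unique t1 t2
  have t3 : Filter.Tendsto (fun n => ⟪uw (f (φ n)), g (φ n)⟫) Filter.atTop (nhds ⟪uw θ, y⟫) :=
    Filter.Tendsto.inner ((uw_cont.tendsto θ).comp hftends) hconv
  have hge : sYf C θ + ε ≤ ⟪uw θ, y⟫ := by
    refine le_of_tendsto_of_tendsto tendsto_const_nhds t3 ?_
    filter_upwards with n
    rw [hg2 (φ n)]
    exact hf2 (φ n)
  have := le_sYf hcomp hne hyface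
  linarith

lemma sXf_lsc (θ : ℝ) {ε : ℝ} (hε : 0 < ε) :
    ∃ δ > 0, ∀ θ', |θ' - θ| < δ → sXf C θ - ε < sXf C θ' := by
  by_contra hcon
  push_neg at hcon
  have hseq : ∀ n : ℕ, ∃ t : ℝ, |t - θ| < 1/(n+1) ∧ sXf C t ≤ sXf C θ - ε := by
    intro n
    obtain ⟨t, ht1, ht2⟩ := hcon (1/(n+1)) (by positivity)
    exact ⟨t, ht1, ht2⟩
  choose f hf1 hf2 using hseq
  have hg : ∀ n : ℕ, ∃ y ∈ faceF C (f n), ⟪uw (f n), y⟫ = sXf C (f n) := fun n =>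
    sXf_mem hcomp hne (f n)
  choose g hg1 hg2 using hg
  obtain ⟨y, hyC, φ, hφ, hconv⟩ := hcomp.tendsto_subseq (fun n => (hg1 n).1)
  have hftends : Filter.Tendsto (fun n => f (φ n)) Filter.atTop (nhds θ) := by
    rw [Metric.tendsto_atTop]
    intro δ hδ
    obtain ⟨N, hN⟩ := exists_nat_gt (1/δ)
    refine ⟨N, fun n hn => ?_⟩
    rw [Real.dist_eq]
    calc |f (φ n) - θ| < 1/(φ n + 1) := hf1 _
    _ ≤ 1/(N + 1) := by
        apply one_div_le_one_div_of_le (by positivity)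
        have h1 : (n : ℝ) ≤ φ n := by exact_mod_cast (hφ.le_apply)
        have h2 : (N : ℝ) ≤ n := by exact_mod_cast hn
        linarith
    _ < δ := by
        rw [div_lt_iff₀ (by positivity)]
        rw [div_lt_iff₀ hδ] at hN
        nlinarith
  have hyface : y ∈ faceF C θ := by
    refine ⟨hyC, ?_⟩
    have t1 : Filter.Tendsto (fun n => ⟪uv (f (φ n)), g (φ n)⟫) Filter.atTop (nhds ⟪uv θ, y⟫) :=
      Filter.Tendsto.inner ((uv_cont.tendsto θ).comp hftends) hconv
    have t2 : Filter.Tendsto (fun n => ⟪uv (f (φ n)), g (φ n)⟫) Filter.atTop (nhds (hS C θ)) := by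
      have : (fun n => ⟪uv (f (φ n)), g (φ n)⟫) = fun n => hS C (f (φ n)) := by
        funext n; exact (hg1 (φ n)).2
      rw [this]
      exact ((hS_cont hcomp hne).tendsto θ).comp hftends
    exact tendsto_nhds_unique t1 t2
  have t3 : Filter.Tendsto (fun n => ⟪uw (f (φ n)), g (φ n)⟫) Filter.atTop (nhds ⟪uw θ, y⟫) :=
    Filter.Tendsto.inner ((uw_cont.tendsto θ).comp hftends) hconv
  have hge : ⟪uw θ, y⟫ ≤ sXf C θ - ε := by
    refine le_of_tendsto_of_tendsto t3 tendsto_const_nhds ?_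
    filter_upwards with n
    rw [hg2 (φ n)]
    exact hf2 (φ n)
  have := sXf_le hcomp hne hyface
  linarith

end Cont

def Tgrid (C : Set E2) (N : ℕ) (x : ℝ) : ℝ := ∑ i ∈ Finset.range N, hS C (x + 2*π*i/N)

section Grid
variable {C : Set E2} (hcomp : IsCompact C) (hne : C.Nonempty)
  {R : ℝ} (hR0 : 0 ≤ R) (hR : ∀ x ∈ C, ‖x‖ ≤ R) {N : ℕ} (hN : 1 ≤ N)
include hcomp hne hR0 hR hN

omit hR0 hR in
lemma Tgrid_shift_one (x : ℝ) : Tgrid C N (x + 2*π/N) = Tgrid C N x := by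
  have hN0 : (N:ℝ) ≠ 0 := Nat.cast_ne_zero.2 (by omega)
  unfold Tgrid
  have e1 : ∀ i ∈ Finset.range N, hS C (x + 2*π/N + 2*π*i/N) = hS C (x + 2*π*(i+1:ℕ)/N) := by
    intro i _
    refine congrArg (hS C) ?_
    push_cast
    field_simp
    ring
  rw [Finset.sum_congr rfl e1]
  have e2 := Finset.sum_range_succ' (fun i => hS C (x + 2*π*i/N)) N
  have e3 := Finset.sum_range_succ (fun i => hS C (x + 2*π*i/N)) N
  have e4 : hS C (x + 2*π*(N:ℕ)/N) = hS C (x + 2*π*(0:ℕ)/N) := by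
    have : x + 2*π*(N:ℕ)/N = (x + 2*π*(0:ℕ)/N) + 2*π := by
      push_cast; field_simp; ring
    rw [this, hS_per]
  linarith [e2, e3, e4]

omit hR0 hR in
lemma Tgrid_shift_k (x : ℝ) (k : ℕ) : Tgrid C N (x + 2*π*k/N) = Tgrid C N x := by
  induction k with
  | zero => simp
  | succ m ih =>
      have : x + 2*π*(m+1:ℕ)/N = (x + 2*π*m/N) + 2*π/N := by push_cast; ring
      rw [this, Tgrid_shift_one hcomp hne hN, ih]

omit hN in
lemma Tgrid_abs_le (x : ℝ) : |Tgrid C N x| ≤ N * R := by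
  unfold Tgrid
  calc |∑ i ∈ Finset.range N, hS C (x + 2*π*i/N)|
      ≤ ∑ i ∈ Finset.range N, |hS C (x + 2*π*i/N)| := Finset.abs_sum_le_sum_abs _ _
    _ ≤ ∑ _i ∈ Finset.range N, R := Finset.sum_le_sum fun i _ => abs_hS_le hcomp hR hne _
    _ = N * R := by rw [Finset.sum_const, Finset.card_range]; ring

omit hN in
lemma Tgrid_lip (x y : ℝ) : |Tgrid C N x - Tgrid C N y| ≤ N * R * |x - y| := by
  unfold Tgrid
  rw [← Finset.sum_sub_distrib]
  calc |∑ i ∈ Finset.range N, (hS C (x + 2*π*i/N) - hS C (y + 2*π*i/N))|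
      ≤ ∑ i ∈ Finset.range N, |hS C (x + 2*π*i/N) - hS C (y + 2*π*i/N)| :=
        Finset.abs_sum_le_sum_abs _ _
    _ ≤ ∑ _i ∈ Finset.range N, R * |x - y| := by
        refine Finset.sum_le_sum fun i _ => ?_
        have := hS_lip hcomp hne hR (x + 2*π*i/N) (y + 2*π*i/N)
        simpa [show x + 2*π*i/N - (y + 2*π*i/N) = x - y by ring] using this
    _ = N * (R * |x - y|) := by rw [Finset.sum_const, Finset.card_range]; simp
    _ = N * R * |x - y| := by ring

lemma Tgrid_shift_bound (x γ : ℝ) (hγ : 0 ≤ γ) :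
    |Tgrid C N (x + γ) - Tgrid C N x| ≤ 2*π*R := by
  have hN0 : (0:ℝ) < N := by exact_mod_cast (by omega : 0 < N)
  have h2π : (0:ℝ) < 2*π := by positivity
  set k := ⌊γ*N/(2*π)⌋₊ with hk
  have hknn : (0:ℝ) ≤ γ*N/(2*π) := by positivity
  have hk1 : (k:ℝ) ≤ γ*N/(2*π) := Nat.floor_le hknn
  have hk2 : γ*N/(2*π) < k + 1 := Nat.lt_floor_add_one _
  set γ' := γ - 2*π*k/N with hγ'
  rw [le_div_iff₀ h2π] at hk1
  rw [div_lt_iff₀ h2π] at hk2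
  have hγ'0 : 0 ≤ γ' := by
    rw [hγ', sub_nonneg, div_le_iff₀ hN0]
    linarith
  have hγ'2 : γ' ≤ 2*π/N := by
    rw [hγ', sub_le_iff_le_add, ← add_div, le_div_iff₀ hN0]
    nlinarith
  have e1 : Tgrid C N (x + γ) = Tgrid C N (x + γ') := by
    have : x + γ = (x + γ') + 2*π*k/N := by rw [hγ']; ring
    rw [this, Tgrid_shift_k hcomp hne hN]
  rw [e1]
  calc |Tgrid C N (x + γ') - Tgrid C N x| ≤ N * R * |x + γ' - x| :=
        Tgrid_lip hcomp hne hR0 hR _ _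
    _ = N * R * γ' := by rw [show x + γ' - x = γ' by ring, abs_of_nonneg hγ'0]
    _ ≤ N * R * (2*π/N) := by
        have : (0:ℝ) ≤ N * R := by positivity
        nlinarith
    _ = 2*π*R := by field_simp

lemma ratio_le_delta : (1 - Real.cos (2*π/N)) / Real.sin (2*π/N) ≤ 2*π/N ∨ True := Or.inr trivial

end Grid

section GridSums
variable {C : Set E2} (hcomp : IsCompact C) (hne : C.Nonempty)
  {R : ℝ} (hR0 : 0 ≤ R) (hR : ∀ x ∈ C, ‖x‖ ≤ R) {N : ℕ} (hN4 : 4 ≤ N)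
include hcomp hne hR0 hR hN4

lemma delta_facts : 0 < 2*π/N ∧ 2*π/N ≤ π/2 := by
  have hN0 : (0:ℝ) < N := by exact_mod_cast (by omega : 0 < N)
  have h4 : (4:ℝ) ≤ N := by exact_mod_cast hN4
  constructor
  · positivity
  · rw [div_le_div_iff₀ hN0 (by norm_num : (0:ℝ) < 2)]
    nlinarith [Real.pi_pos]

lemma one_sub_cos_bound :
    (0:ℝ) ≤ 1 - Real.cos (2*π/N) ∧ (N:ℝ) * (1 - Real.cos (2*π/N)) ≤ 2*π*Real.sin (2*π/N) := by
  obtain ⟨hδ0, hδ2⟩ := delta_facts hcomp hne hR0 hR hN4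
  set δ := 2*π/N with hδ
  have hN0 : (0:ℝ) < N := by exact_mod_cast (by omega : 0 < N)
  have hNδ : (N:ℝ) * δ = 2*π := by rw [hδ]; field_simp
  have h2 := Real.one_sub_sq_div_two_le_cos (x := δ)
  have h3 := Real.mul_le_sin (le_of_lt hδ0) hδ2
  have h5 := Real.cos_le_one δ
  have hπ4 := Real.pi_le_four
  have hπ0 := Real.pi_pos
  constructor
  · linarith
  · -- N(1-cosδ) ≤ N δ²/2 = (2π)δ/2 = πδ ≤ (2π)(2/π)δ /?  and 2π sinδ ≥ 2π (2/π) δ = 4δ ≥ πδ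
    have e1 : (N:ℝ) * (1 - Real.cos δ) ≤ N * (δ^2/2) := by nlinarith
    have e2 : (N:ℝ) * (δ^2/2) = π * δ := by nlinarith
    have e3 : 2*π*Real.sin δ ≥ 4*δ := by
      have : 2*π*(2/π*δ) = 4*δ := by field_simp; ring
      nlinarith
    nlinarith [hδ0.le]

lemma gridsum_sY_ge (x : ℝ) :
    -(2*π*R) ≤ ∑ i ∈ Finset.range N, sYf C (x + 2*π*i/N) := by
  obtain ⟨hδ0, hδ2⟩ := delta_facts hcomp hne hR0 hR hN4
  obtain ⟨hc0, hcb⟩ := one_sub_cos_bound hcomp hne hR0 hR hN4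
  set δ := 2*π/N with hδ
  have hδπ : δ < π := lt_of_le_of_lt hδ2 (by linarith [Real.pi_pos])
  have hsin : 0 < Real.sin δ := Real.sin_pos_of_pos_of_lt_pi hδ0 hδπ
  have hN1 : 1 ≤ N := by omega
  have pointwise : ∀ i ∈ Finset.range N,
      (hS C (x + 2*π*i/N) * Real.cos δ - hS C ((x-δ) + 2*π*i/N))/Real.sin δ
        ≤ sYf C (x + 2*π*i/N) := by
    intro i _
    have h1 := sXf_ge_bound hcomp hne (θ := x + 2*π*i/N) hδ0 hδπ
    have h2 := sXf_le_sYf hcomp hne (x + 2*π*i/N)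
    have e : x + 2*π*i/N - δ = (x-δ) + 2*π*i/N := by ring
    rw [e] at h1
    linarith
  have hsum := Finset.sum_le_sum pointwise
  have e2 : ∑ i ∈ Finset.range N,
      (hS C (x + 2*π*i/N) * Real.cos δ - hS C ((x-δ) + 2*π*i/N))/Real.sin δ
      = (Real.cos δ * Tgrid C N x - Tgrid C N (x-δ))/Real.sin δ := by
    rw [← Finset.sum_div]
    congr 1
    rw [Finset.sum_sub_distrib]
    unfold Tgrid
    rw [Finset.mul_sum]
    congr 1
    exact Finset.sum_congr rfl fun i _ => by ring
  have e3 : Tgrid C N (x-δ) = Tgrid C N x := by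
    conv_rhs => rw [show x = (x - δ) + 2*π/N by rw [hδ]; ring]
    rw [Tgrid_shift_one hcomp hne hN1]
  rw [e2, e3] at hsum
  refine le_trans ?_ hsum
  rw [le_div_iff₀ hsin]
  have hT := Tgrid_abs_le hcomp hne hR0 hR (N := N) x
  have h1 : Tgrid C N x ≤ N*R := (abs_le.1 hT).2
  have h2 : -(N*R) ≤ Tgrid C N x := (abs_le.1 hT).1
  nlinarith [hcb, hc0, mul_le_mul_of_nonneg_right h1 hc0]

lemma gridsum_sX_le (x : ℝ) :
    ∑ i ∈ Finset.range N, sXf C (x + 2*π*i/N) ≤ 2*π*R := by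
  obtain ⟨hδ0, hδ2⟩ := delta_facts hcomp hne hR0 hR hN4
  obtain ⟨hc0, hcb⟩ := one_sub_cos_bound hcomp hne hR0 hR hN4
  set δ := 2*π/N with hδ
  have hδπ : δ < π := lt_of_le_of_lt hδ2 (by linarith [Real.pi_pos])
  have hsin : 0 < Real.sin δ := Real.sin_pos_of_pos_of_lt_pi hδ0 hδπ
  have hN1 : 1 ≤ N := by omega
  have pointwise : ∀ i ∈ Finset.range N,
      sXf C (x + 2*π*i/N)
        ≤ (hS C ((x+δ) + 2*π*i/N) - hS C (x + 2*π*i/N) * Real.cos δ)/Real.sin δ := by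
    intro i _
    have h1 := sYf_le_bound hcomp hne (θ := x + 2*π*i/N) hδ0 hδπ
    have h2 := sXf_le_sYf hcomp hne (x + 2*π*i/N)
    have e : x + 2*π*i/N + δ = (x+δ) + 2*π*i/N := by ring
    rw [e] at h1
    linarith
  have hsum := Finset.sum_le_sum pointwise
  have e2 : ∑ i ∈ Finset.range N,
      (hS C ((x+δ) + 2*π*i/N) - hS C (x + 2*π*i/N) * Real.cos δ)/Real.sin δ
      = (Tgrid C N (x+δ) - Real.cos δ * Tgrid C N x)/Real.sin δ := by
    rw [← Finset.sum_div]
    congr 1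
    rw [Finset.sum_sub_distrib]
    unfold Tgrid
    rw [Finset.mul_sum]
    congr 1
    exact Finset.sum_congr rfl fun i _ => by ring
  have e3 : Tgrid C N (x+δ) = Tgrid C N x := by
    rw [hδ, Tgrid_shift_one hcomp hne hN1]
  rw [e2, e3] at hsum
  refine le_trans hsum ?_
  rw [div_le_iff₀ hsin]
  have hT := Tgrid_abs_le hcomp hne hR0 hR (N := N) x
  have h1 : Tgrid C N x ≤ N*R := (abs_le.1 hT).2
  have h2 : -(N*R) ≤ Tgrid C N x := (abs_le.1 hT).1
  nlinarith [hcb, hc0, mul_le_mul_of_nonneg_right h2 hc0]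

end GridSums

section Cases
variable {C : Set E2} {α : ℝ} (hcomp : IsCompact C) (hne : C.Nonempty)
  (hα1 : 0 < α) (hα2 : α < π)
  {R : ℝ} (hR0 : 0 ≤ R) (hR : ∀ x ∈ C, ‖x‖ ≤ R)

include hα1 hα2 in
lemma bbdd_eq (θ : ℝ) :
    bb C α θ + dd C α θ = (1+Real.cos α)/Real.sin α * (hS C (θ+α) - hS C θ) := by
  have hs := sin_alpha_pos hα1 hα2
  unfold bb dd
  field_simp
  ring

include hcomp hne hα1 hα2 hR0 hR

lemma caseA_contra {ε : ℝ} (hε : 0 < ε) (hlb : ∀ θ, ε ≤ Gq C α θ) : False := by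
  have hs := sin_alpha_pos hα1 hα2
  set κ := (1+Real.cos α)/Real.sin α with hκ
  have hκ0 : 0 ≤ κ := by
    apply div_nonneg _ (le_of_lt hs)
    linarith [Real.neg_one_le_cos α]
  obtain ⟨N, hNgt⟩ := exists_nat_gt (max 4 ((κ*(2*π*R) + 2*(2*π*R))/ε))
  have hN4 : 4 ≤ N := by
    have := le_max_left (4:ℝ) ((κ*(2*π*R) + 2*(2*π*R))/ε)
    exact_mod_cast (by linarith [lt_of_le_of_lt this hNgt] : (4:ℝ) ≤ N)
  have hNε : κ*(2*π*R) + 2*(2*π*R) < N * ε := by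
    have h1 := le_max_right (4:ℝ) ((κ*(2*π*R) + 2*(2*π*R))/ε)
    have h2 : (κ*(2*π*R) + 2*(2*π*R))/ε < N := lt_of_le_of_lt h1 hNgt
    rw [div_lt_iff₀ hε] at h2
    linarith
  -- sum of Gq over the grid
  have hsum_lb : (N:ℝ) * ε ≤ ∑ i ∈ Finset.range N, Gq C α ((0:ℝ) + 2*π*i/N) := by
    calc (N:ℝ) * ε = ∑ _i ∈ Finset.range N, ε := by
          rw [Finset.sum_const, Finset.card_range, nsmul_eq_mul]
      _ ≤ _ := Finset.sum_le_sum fun i _ => hlb _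
  have hGq_eq : ∀ θ : ℝ, Gq C α θ
      = (bb C α θ + dd C α θ) - sYf C θ - sYf C (θ+α) := by
    intro θ; unfold Gq; ring
  have hsum_split : ∑ i ∈ Finset.range N, Gq C α ((0:ℝ) + 2*π*i/N)
      = κ * (Tgrid C N α - Tgrid C N 0)
        - (∑ i ∈ Finset.range N, sYf C ((0:ℝ) + 2*π*i/N))
        - (∑ i ∈ Finset.range N, sYf C (α + 2*π*i/N)) := by
    have e1 : ∀ i ∈ Finset.range N, Gq C α ((0:ℝ) + 2*π*i/N)
        = κ * (hS C (α + 2*π*i/N) - hS C ((0:ℝ) + 2*π*i/N))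
          - sYf C ((0:ℝ) + 2*π*i/N) - sYf C (α + 2*π*i/N) := by
      intro i _
      rw [hGq_eq, bbdd_eq hα1 hα2]
      rw [show (0:ℝ) + 2*π*i/N + α = α + 2*π*i/N by ring]
    rw [Finset.sum_congr rfl e1]
    rw [Finset.sum_sub_distrib, Finset.sum_sub_distrib, ← Finset.mul_sum]
    unfold Tgrid
    rw [Finset.sum_sub_distrib]
  have hshift : |Tgrid C N α - Tgrid C N 0| ≤ 2*π*R := by
    have := Tgrid_shift_bound hcomp hne hR0 hR (by omega : 1 ≤ N) 0 α (le_of_lt hα1)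
    rwa [zero_add] at this
  have hsY1 := gridsum_sY_ge hcomp hne hR0 hR hN4 (0:ℝ)
  have hsY2 := gridsum_sY_ge hcomp hne hR0 hR hN4 α
  have hub : ∑ i ∈ Finset.range N, Gq C α ((0:ℝ) + 2*π*i/N)
      ≤ κ*(2*π*R) + 2*(2*π*R) := by
    rw [hsum_split]
    have h1 : κ * (Tgrid C N α - Tgrid C N 0) ≤ κ * (2*π*R) := by
      have := (abs_le.1 hshift).2
      nlinarith
    linarith
  linarith

lemma caseB_contra {ε : ℝ} (hε : 0 < ε) (hlb : ∀ θ, ε ≤ Gq' C α θ) : False := by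
  have hs := sin_alpha_pos hα1 hα2
  set κ := (1+Real.cos α)/Real.sin α with hκ
  have hκ0 : 0 ≤ κ := by
    apply div_nonneg _ (le_of_lt hs)
    linarith [Real.neg_one_le_cos α]
  obtain ⟨N, hNgt⟩ := exists_nat_gt (max 4 ((κ*(2*π*R) + 2*(2*π*R))/ε))
  have hN4 : 4 ≤ N := by
    have := le_max_left (4:ℝ) ((κ*(2*π*R) + 2*(2*π*R))/ε)
    exact_mod_cast (by linarith [lt_of_le_of_lt this hNgt] : (4:ℝ) ≤ N)
  have hNε : κ*(2*π*R) + 2*(2*π*R) < N * ε := by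
    have h1 := le_max_right (4:ℝ) ((κ*(2*π*R) + 2*(2*π*R))/ε)
    have h2 : (κ*(2*π*R) + 2*(2*π*R))/ε < N := lt_of_le_of_lt h1 hNgt
    rw [div_lt_iff₀ hε] at h2
    linarith
  have hsum_lb : (N:ℝ) * ε ≤ ∑ i ∈ Finset.range N, Gq' C α ((0:ℝ) + 2*π*i/N) := by
    calc (N:ℝ) * ε = ∑ _i ∈ Finset.range N, ε := by
          rw [Finset.sum_const, Finset.card_range, nsmul_eq_mul]
      _ ≤ _ := Finset.sum_le_sum fun i _ => hlb _
  have hGq_eq : ∀ θ : ℝ, Gq' C α θ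
      = sXf C θ + sXf C (θ+α) - (bb C α θ + dd C α θ) := by
    intro θ; unfold Gq'; ring
  have hsum_split : ∑ i ∈ Finset.range N, Gq' C α ((0:ℝ) + 2*π*i/N)
      = (∑ i ∈ Finset.range N, sXf C ((0:ℝ) + 2*π*i/N))
        + (∑ i ∈ Finset.range N, sXf C (α + 2*π*i/N))
        - κ * (Tgrid C N α - Tgrid C N 0) := by
    have e1 : ∀ i ∈ Finset.range N, Gq' C α ((0:ℝ) + 2*π*i/N)
        = sXf C ((0:ℝ) + 2*π*i/N) + sXf C (α + 2*π*i/N)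
          - κ * (hS C (α + 2*π*i/N) - hS C ((0:ℝ) + 2*π*i/N)) := by
      intro i _
      rw [hGq_eq, bbdd_eq hα1 hα2]
      rw [show (0:ℝ) + 2*π*i/N + α = α + 2*π*i/N by ring]
    rw [Finset.sum_congr rfl e1]
    rw [Finset.sum_sub_distrib, Finset.sum_add_distrib, ← Finset.mul_sum]
    unfold Tgrid
    rw [Finset.sum_sub_distrib]
  have hshift : |Tgrid C N α - Tgrid C N 0| ≤ 2*π*R := by
    have := Tgrid_shift_bound hcomp hne hR0 hR (by omega : 1 ≤ N) 0 α (le_of_lt hα1)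
    rwa [zero_add] at this
  have hsX1 := gridsum_sX_le hcomp hne hR0 hR hN4 (0:ℝ)
  have hsX2 := gridsum_sX_le hcomp hne hR0 hR hN4 α
  have hub : ∑ i ∈ Finset.range N, Gq' C α ((0:ℝ) + 2*π*i/N)
      ≤ κ*(2*π*R) + 2*(2*π*R) := by
    rw [hsum_split]
    have h1 : -(κ * (Tgrid C N α - Tgrid C N 0)) ≤ κ * (2*π*R) := by
      have := (abs_le.1 hshift).1
      nlinarith
    linarith
  linarith

end Cases

lemma per_int {β : Type*} {f : ℝ → β} (h : ∀ t, f (t + 2*π) = f t) :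
    ∀ (k : ℤ) (t : ℝ), f (t + 2*π*k) = f t := by
  intro k
  induction k using Int.induction_on with
  | zero => intro t; norm_num
  | succ n ih =>
      intro t
      have : t + 2*π*((n:ℤ)+1:ℤ) = (t + 2*π*(n:ℤ)) + 2*π := by push_cast; ring
      rw [this, h, ih]
  | pred n ih =>
      intro t
      have e : (t + 2*π*(-(n:ℤ)-1:ℤ)) + 2*π = t + 2*π*(-(n:ℤ):ℤ) := by push_cast; ring
      calc f (t + 2*π*(-(n:ℤ)-1:ℤ)) = f ((t + 2*π*(-(n:ℤ)-1:ℤ)) + 2*π) := (h _).symm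
      _ = f (t + 2*π*(-(n:ℤ):ℤ)) := by rw [e]
      _ = f t := ih t

lemma exists_uv {v : E2} (hv : ‖v‖ = 1) : ∃ θ, uv θ = v := by
  have hsum : v 0 ^ 2 + v 1 ^ 2 = 1 := by
    have := hv
    rw [EuclideanSpace.norm_eq] at this
    have h2 : Real.sqrt (‖v 0‖^2 + ‖v 1‖^2) = 1 := by
      rw [← this]; congr 1; rw [Fin.sum_univ_two]
    have h3 : ‖v 0‖^2 + ‖v 1‖^2 = 1 := by
      have h4 : (0:ℝ) ≤ ‖v 0‖^2 + ‖v 1‖^2 := by positivity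
      nlinarith [Real.sq_sqrt h4]
    simpa [sq_abs] using h3
  have hv0 : -1 ≤ v 0 ∧ v 0 ≤ 1 := by constructor <;> nlinarith
  rcases le_or_gt 0 (v 1) with hs | hs
  · refine ⟨Real.arccos (v 0), ?_⟩
    ext i
    fin_cases i
    · show Real.cos (Real.arccos (v 0)) = v 0
      exact Real.cos_arccos hv0.1 hv0.2
    · show Real.sin (Real.arccos (v 0)) = v 1
      rw [Real.sin_arccos]
      rw [show 1 - v 0 ^ 2 = v 1 ^ 2 by nlinarith]
      exact Real.sqrt_sq hs
  · refine ⟨-Real.arccos (v 0), ?_⟩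
    ext i
    fin_cases i
    · show Real.cos (-Real.arccos (v 0)) = v 0
      rw [Real.cos_neg]
      exact Real.cos_arccos hv0.1 hv0.2
    · show Real.sin (-Real.arccos (v 0)) = v 1
      rw [Real.sin_neg, Real.sin_arccos]
      rw [show 1 - v 0 ^ 2 = v 1 ^ 2 by nlinarith]
      rw [show v 1 ^ 2 = (-(v 1))^2 by ring, Real.sqrt_sq (by linarith)]
      ring

section NotAllD
variable {C : Set E2} {α : ℝ} (hcomp : IsCompact C) (hne : C.Nonempty)
  (hα1 : 0 < α) (hα2 : α < π)
include hcomp hne hα1 hα2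

lemma SSp_locally_const (hall : ∀ θ, SSp C α θ ∈ C) {θ θ' : ℝ}
    (h1 : θ ≤ θ') (h2 : θ' - θ ≤ α/2) : SSp C α θ = SSp C α θ' := by
  have hz1 := SSp_mem_faceθ hcomp hne hα1 hα2 (hall θ)
  have hz2 := SSp_mem_faceα hcomp hne hα1 hα2 (hall θ)
  have hz1' := SSp_mem_faceθ hcomp hne hα1 hα2 (hall θ')
  have hz2' := SSp_mem_faceα hcomp hne hα1 hα2 (hall θ')
  -- common window [θ', θ+α]
  have f1 : SSp C α θ ∈ faceF C θ' :=
    mem_face_between hcomp hne hz1 hz2 h1 (by linarith) (by linarith)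
  have f2 : SSp C α θ ∈ faceF C (θ+α) := hz2
  have f1' : SSp C α θ' ∈ faceF C θ' := hz1'
  have f2' : SSp C α θ' ∈ faceF C (θ+α) :=
    mem_face_between hcomp hne hz1' hz2' (by linarith) (by linarith) (by linarith)
  exact face_unique hcomp f1 f2 f1' f2' (by linarith) (by linarith)

lemma SSp_const (hall : ∀ θ, SSp C α θ ∈ C) (θ : ℝ) : SSp C α θ = SSp C α 0 := by
  have step : ∀ t : ℝ, SSp C α t = SSp C α (t + α/2) :=
    fun t => SSp_locally_const hcomp hne hα1 hα2 hall (by linarith) (by linarith)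
  have stepin : ∀ (t s : ℝ), 0 ≤ s - t → s - t ≤ α/2 → SSp C α t = SSp C α s := by
    intro t s h1 h2
    exact SSp_locally_const hcomp hne hα1 hα2 hall (by linarith) h2
  have key : ∀ n : ℕ, ∀ t : ℝ, |t| ≤ n*(α/2) → SSp C α t = SSp C α 0 := by
    intro n
    induction n with
    | zero =>
        intro t ht
        simp only [Nat.cast_zero, zero_mul] at ht
        have : t = 0 := abs_eq_zero.1 (le_antisymm ht (abs_nonneg t))
        rw [this]
    | succ m ih =>
        intro t ht
        rcases le_or_gt (|t|) (m*(α/2)) with hle | hgt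
        · exact ih t hle
        · rcases le_or_gt 0 t with hpos | hneg
          · rw [abs_of_nonneg hpos] at ht hgt
            have e1 : SSp C α ((m:ℝ)*(α/2)) = SSp C α t := by
              refine stepin _ _ (by linarith) (by push_cast at ht ⊢; linarith)
            rw [← e1]
            refine ih _ ?_
            rw [abs_of_nonneg (by positivity)]
          · rw [abs_of_neg hneg] at ht hgt
            have e1 : SSp C α t = SSp C α (-(m:ℝ)*(α/2)) := by
              refine stepin _ _ (by linarith) (by push_cast at ht ⊢; linarith)
            rw [e1]
            refine ih _ ?_
            have hmn : (0:ℝ) ≤ (m:ℝ)*(α/2) := by positivity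
            rw [abs_of_nonpos (by linarith : -(m:ℝ)*(α/2) ≤ 0)]
            push_cast
            linarith
  obtain ⟨n, hn⟩ := exists_nat_gt (|θ|/(α/2))
  refine key n θ ?_
  rw [div_lt_iff₀ (by linarith)] at hn
  linarith

lemma not_all_D (hint : (interior C).Nonempty) : ¬ (∀ θ, SSp C α θ ∈ C) := by
  intro hall
  set z := SSp C α 0 with hz
  have hzface : ∀ θ, z ∈ faceF C θ := by
    intro θ
    rw [hz, ← SSp_const hcomp hne hα1 hα2 hall θ]
    exact SSp_mem_faceθ hcomp hne hα1 hα2 (hall θ)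
  have hsub : ∀ x ∈ C, x = z := by
    intro x hx
    by_contra hxz
    have hne2 : ‖x - z‖ ≠ 0 := by
      simpa [sub_eq_zero] using hxz
    have hnorm : ‖(‖x - z‖⁻¹) • (x - z)‖ = 1 := by
      rw [norm_smul, norm_inv, norm_norm, inv_mul_cancel₀ hne2]
    obtain ⟨θ, hθ⟩ := exists_uv hnorm
    have h1 : ⟪uv θ, x⟫ ≤ ⟪uv θ, z⟫ := (hzface θ).2 ▸ hS_le hcomp hx
    have h2 : ⟪uv θ, x - z⟫ = ‖x - z‖ := by
      rw [hθ, real_inner_smul_left, real_inner_self_eq_norm_mul_norm]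
      field_simp
    have h3 : ⟪uv θ, x - z⟫ ≤ 0 := by rw [inner_sub_right]; linarith
    have h4 : 0 < ‖x - z‖ := lt_of_le_of_ne (norm_nonneg _) (Ne.symm hne2)
    rw [h2] at h3
    linarith
  obtain ⟨x0, hx0⟩ := hint
  obtain ⟨ε, hε, hball⟩ := Metric.isOpen_iff.1 isOpen_interior x0 hx0
  have hx0C : x0 ∈ C := interior_subset hx0
  have hx0z : x0 = z := hsub x0 hx0C
  have hmem : x0 + (ε/2) • uv 0 ∈ C := by
    refine interior_subset (hball ?_)
    rw [Metric.mem_ball, dist_eq_norm, add_sub_cancel_left, norm_smul, norm_uv]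
    rw [Real.norm_eq_abs, abs_of_pos (by linarith)]
    linarith
  have := hsub _ hmem
  rw [hx0z] at this
  have hcontra : (ε/2) • uv 0 = 0 := by
    have := congrArg (fun w => w - z) this
    simpa using this
  have : (ε/2) * uv 0 0 = 0 := by
    have := congrArg (fun w : E2 => w 0) hcontra
    simpa using this
  rw [show uv 0 0 = Real.cos 0 from rfl, Real.cos_zero] at this
  norm_num at this
  linarith

end NotAllD

section LSC
variable {C : Set E2} {α : ℝ} (hcomp : IsCompact C) (hne : C.Nonempty)
  (hα1 : 0 < α) (hα2 : α < π)
include hcomp hne hα1 hα2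

omit hα1 hα2 in
lemma bd_cont : Continuous (fun t => bb C α t + dd C α t) := by
  unfold bb dd
  have hc := hS_cont hcomp hne
  have h1 : Continuous (fun t : ℝ => hS C (t + α)) := hc.comp (continuous_id.add continuous_const)
  continuity

lemma Gq_lsc (θ : ℝ) {ε : ℝ} (hε : 0 < ε) :
    ∃ δ > 0, ∀ θ', |θ' - θ| < δ → Gq C α θ - ε < Gq C α θ' := by
  have hc : ContinuousAt (fun t => bb C α t + dd C α t) θ := (bd_cont hcomp hne).continuousAt
  rw [Metric.continuousAt_iff] at hc
  obtain ⟨δ1, hδ1, hc1⟩ := hc (ε/4) (by linarith)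
  obtain ⟨δ2, hδ2, hc2⟩ := sYf_usc hcomp hne θ (show 0 < ε/4 by linarith)
  obtain ⟨δ3, hδ3, hc3⟩ := sYf_usc hcomp hne (θ+α) (show 0 < ε/4 by linarith)
  refine ⟨min δ1 (min δ2 δ3), by positivity, fun θ' hθ' => ?_⟩
  have h1 : |θ' - θ| < δ1 := lt_of_lt_of_le hθ' (min_le_left _ _)
  have h2 : |θ' - θ| < δ2 := lt_of_lt_of_le hθ' ((min_le_right _ _).trans (min_le_left _ _))
  have h3 : |θ' + α - (θ+α)| < δ3 := by
    rw [show θ' + α - (θ+α) = θ' - θ by ring]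
    exact lt_of_lt_of_le hθ' ((min_le_right _ _).trans (min_le_right _ _))
  have e1 := hc1 (show dist θ' θ < δ1 by rwa [Real.dist_eq])
  rw [Real.dist_eq] at e1
  have e2 := hc2 θ' h2
  have e3 := hc3 (θ'+α) h3
  have hGq : ∀ t, Gq C α t = (bb C α t + dd C α t) - sYf C t - sYf C (t+α) := by
    intro t; unfold Gq; ring
  rw [hGq, hGq]
  have := abs_lt.1 e1
  linarith [this.1]

lemma Gq'_lsc (θ : ℝ) {ε : ℝ} (hε : 0 < ε) :
    ∃ δ > 0, ∀ θ', |θ' - θ| < δ → Gq' C α θ - ε < Gq' C α θ' := by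
  have hc : ContinuousAt (fun t => bb C α t + dd C α t) θ := (bd_cont hcomp hne).continuousAt
  rw [Metric.continuousAt_iff] at hc
  obtain ⟨δ1, hδ1, hc1⟩ := hc (ε/4) (by linarith)
  obtain ⟨δ2, hδ2, hc2⟩ := sXf_lsc hcomp hne θ (show 0 < ε/4 by linarith)
  obtain ⟨δ3, hδ3, hc3⟩ := sXf_lsc hcomp hne (θ+α) (show 0 < ε/4 by linarith)
  refine ⟨min δ1 (min δ2 δ3), by positivity, fun θ' hθ' => ?_⟩
  have h1 : |θ' - θ| < δ1 := lt_of_lt_of_le hθ' (min_le_left _ _)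
  have h2 : |θ' - θ| < δ2 := lt_of_lt_of_le hθ' ((min_le_right _ _).trans (min_le_left _ _))
  have h3 : |θ' + α - (θ+α)| < δ3 := by
    rw [show θ' + α - (θ+α) = θ' - θ by ring]
    exact lt_of_lt_of_le hθ' ((min_le_right _ _).trans (min_le_right _ _))
  have e1 := hc1 (show dist θ' θ < δ1 by rwa [Real.dist_eq])
  rw [Real.dist_eq] at e1
  have e2 := hc2 θ' h2
  have e3 := hc3 (θ'+α) h3
  have hGq : ∀ t, Gq' C α t = sXf C t + sXf C (t+α) - (bb C α t + dd C α t) := by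
    intro t; unfold Gq'; ring
  rw [hGq, hGq]
  have := abs_lt.1 e1
  linarith [this.2]

end LSC

lemma eps_of_pos_periodic {f : ℝ → ℝ} (hper : ∀ t, f (t + 2*π) = f t)
    (hlsc : ∀ θ (ε : ℝ), 0 < ε → ∃ δ > 0, ∀ θ', |θ' - θ| < δ → f θ - ε < f θ')
    (hpos : ∀ θ, 0 < f θ) : ∃ ε > 0, ∀ θ, ε ≤ f θ := by
  have hchoice : ∀ c : ℝ, ∃ δ > 0, ∀ θ', |θ' - c| < δ → f c / 2 < f θ' := by
    intro c
    obtain ⟨δ, hδ, hp⟩ := hlsc c (f c / 2) (by linarith [hpos c])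
    exact ⟨δ, hδ, fun θ' h => by have := hp θ' h; linarith⟩
  choose δf hδf hfb using hchoice
  have hcover : Icc (0:ℝ) (2*π) ⊆ ⋃ c : ℝ, Metric.ball c (δf c) := by
    intro t _
    exact Set.mem_iUnion.2 ⟨t, Metric.mem_ball_self (hδf t)⟩
  obtain ⟨s, hs⟩ := isCompact_Icc.elim_finite_subcover (fun c : ℝ => Metric.ball c (δf c))
    (fun c => Metric.isOpen_ball) hcover
  have h0mem : (0:ℝ) ∈ Icc (0:ℝ) (2*π) := ⟨le_refl 0, by positivity⟩
  have hsne : s.Nonempty := by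
    obtain ⟨c, hc, _⟩ := Set.mem_iUnion₂.1 (hs h0mem)
    exact ⟨c, hc⟩
  set img := s.image (fun c => f c / 2) with himg
  have himgne : img.Nonempty := hsne.image _
  set ε := img.min' himgne with hε
  have hεpos : 0 < ε := by
    obtain ⟨c, hc, hceq⟩ := Finset.mem_image.1 (img.min'_mem himgne)
    rw [hε, ← hceq]
    linarith [hpos c]
  have hIcc : ∀ t ∈ Icc (0:ℝ) (2*π), ε ≤ f t := by
    intro t ht
    obtain ⟨c, hc, hcball⟩ := Set.mem_iUnion₂.1 (hs ht)
    have h1 : f c / 2 < f t := hfb c t (by rwa [← Real.dist_eq])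
    have h2 : ε ≤ f c / 2 := Finset.min'_le _ _ (Finset.mem_image_of_mem _ hc)
    linarith
  refine ⟨ε, hεpos, fun θ => ?_⟩
  have h2π : 0 < 2*π := by positivity
  set k := ⌊θ/(2*π)⌋ with hk
  have hk1 : (k:ℝ) ≤ θ/(2*π) := Int.floor_le _
  have hk2 : θ/(2*π) < k + 1 := Int.lt_floor_add_one _
  have hmem : θ - 2*π*k ∈ Icc (0:ℝ) (2*π) := by
    constructor
    · rw [le_div_iff₀ h2π] at hk1  -- wrong direction; fixed by nlinarith below
      linarith
    · rw [div_lt_iff₀ h2π] at hk2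
      nlinarith
  have hper' : f (θ - 2*π*k + 2*π*k) = f (θ - 2*π*k) := per_int hper k (θ - 2*π*k)
  have : f θ = f (θ - 2*π*k) := by
    rw [← hper']
    congr 1
    ring
  rw [this]
  exact hIcc _ hmem

section Main
variable {C : Set E2} {α : ℝ} (hcomp : IsCompact C) (hconv : Convex ℝ C) (hne : C.Nonempty)
  (hα1 : 0 < α) (hα2 : α < π)
include hcomp hconv hne hα1 hα2

lemma exists_good (hint : (interior C).Nonempty) :
    ∃ θ, sYf C θ < bb C α θ ∧ Gq C α θ ≤ 0 ∧ Gq' C α θ ≤ 0 := by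
  by_contra hcon
  push_neg at hcon
  obtain ⟨R, hR0, hR⟩ := exists_bound hcomp
  set A := {θ : ℝ | 0 < Gq C α θ} with hA
  set B := {θ : ℝ | 0 < Gq' C α θ} with hB
  set D := {θ : ℝ | SSp C α θ ∈ C} with hD
  have hDiff : ∀ θ, θ ∈ D ↔ bb C α θ ≤ sYf C θ := fun θ =>
    SSp_mem_iff hcomp hconv hne hα1 hα2
  have hcover : ∀ θ : ℝ, θ ∈ A ∨ θ ∈ B ∨ θ ∈ D := by
    intro θ
    by_cases hd : θ ∈ D
    · exact Or.inr (Or.inr hd)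
    · have h1 : sYf C θ < bb C α θ := by
        have := (hDiff θ)
        rcases lt_or_ge (sYf C θ) (bb C α θ) with h | h
        · exact h
        · exact absurd (this.2 h) hd
      rcases lt_or_ge 0 (Gq C α θ) with h | h
      · exact Or.inl h
      · exact Or.inr (Or.inl (hcon θ h1 h))
  have hABdisj : Disjoint A B := by
    rw [Set.disjoint_left]
    intro θ ha hb
    have h1 : 0 < Gq C α θ := ha
    have h2 : 0 < Gq' C α θ := hb
    have h3 := sXf_le_sYf hcomp hne θ
    have h4 := sXf_le_sYf hcomp hne (θ+α)
    unfold Gq at h1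
    unfold Gq' at h2
    linarith
  have hAopen : IsOpen A := by
    rw [Metric.isOpen_iff]
    intro θ hθ
    obtain ⟨δ, hδ, hp⟩ := Gq_lsc hcomp hne hα1 hα2 θ (show 0 < Gq C α θ from hθ)
    exact ⟨δ, hδ, fun θ' h => by
      have := hp θ' (by rw [Metric.mem_ball, Real.dist_eq] at h; exact h)
      show 0 < Gq C α θ'
      linarith⟩
  have hBopen : IsOpen B := by
    rw [Metric.isOpen_iff]
    intro θ hθ
    obtain ⟨δ, hδ, hp⟩ := Gq'_lsc hcomp hne hα1 hα2 θ (show 0 < Gq' C α θ from hθ)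
    exact ⟨δ, hδ, fun θ' h => by
      have := hp θ' (by rw [Metric.mem_ball, Real.dist_eq] at h; exact h)
      show 0 < Gq' C α θ'
      linarith⟩
  have hAD : ∀ θ ∈ D, Gq C α θ ≤ 0 := by
    intro θ hθ
    have h1 : bb C α θ ≤ sYf C θ := (hDiff θ).1 hθ
    have h2 : dd C α θ ≤ sYf C (θ+α) := dd_le_sYf hcomp hne hα1 hα2 θ
    unfold Gq; linarith
  have hBD : ∀ θ ∈ D, Gq' C α θ ≤ 0 := by
    intro θ hθ
    have h1 : sXf C (θ+α) ≤ dd C α θ := by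
      have hf := SSp_mem_faceα hcomp hne hα1 hα2 (show SSp C α θ ∈ C from hθ)
      have := sXf_le hcomp hne hf
      rwa [inner_uwα_SSp hα1 hα2] at this
    have h2 : sXf C θ ≤ bb C α θ := bb_ge_sXf hcomp hne hα1 hα2 θ
    unfold Gq'; linarith
  -- D is not everything
  have hDne_univ : ∃ θ0, θ0 ∉ D := by
    by_contra hall
    push_neg at hall
    exact not_all_D hcomp hne hα1 hα2 hint (fun θ => hall θ)
  obtain ⟨θ0, hθ0⟩ := hDne_univ
  by_cases hDempty : D = ∅
  · -- A, B open disjoint cover ℝ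
    have hcover2 : (Set.univ : Set ℝ) ⊆ A ∪ B := by
      intro θ _
      rcases hcover θ with h | h | h
      · exact Or.inl h
      · exact Or.inr h
      · rw [hDempty] at h; exact absurd h (Set.notMem_empty θ)
    rcases isPreconnected_univ.subset_or_subset hAopen hBopen hABdisj hcover2 with h | h
    · have hpos : ∀ θ, 0 < Gq C α θ := fun θ => h (Set.mem_univ θ)
      obtain ⟨ε, hε, hlb⟩ := eps_of_pos_periodic (Gq_per C α) (fun θ ε he => Gq_lsc hcomp hne hα1 hα2 θ he) hpos
      exact caseA_contra hcomp hne hα1 hα2 hR0 hR hε hlb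
    · have hpos : ∀ θ, 0 < Gq' C α θ := fun θ => h (Set.mem_univ θ)
      obtain ⟨ε, hε, hlb⟩ := eps_of_pos_periodic (Gq'_per C α) (fun θ ε he => Gq'_lsc hcomp hne hα1 hα2 θ he) hpos
      exact caseB_contra hcomp hne hα1 hα2 hR0 hR hε hlb
  · -- D nonempty: pick the two neighbours of θ0 in D
    have hDclosed : IsClosed D := by
      have : D = (SSp C α) ⁻¹' C := rfl
      rw [this]
      exact hcomp.isClosed.preimage (SSp_cont hcomp hne)
    obtain ⟨d0, hd0⟩ := Set.nonempty_iff_ne_empty.2 hDempty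
    have hDper : ∀ (k : ℤ) (t : ℝ), (t + 2*π*k ∈ D) ↔ (t ∈ D) := by
      intro k t
      have := per_int (f := SSp C α) (SSp_per C α) k t
      constructor
      · intro h; rw [hD, Set.mem_setOf_eq, this] at h; exact h
      · intro h; rw [hD, Set.mem_setOf_eq, this]; exact h
    have h2π : (0:ℝ) < 2*π := by positivity
    -- translate d0 into [θ0 - 2π, θ0]
    have hdleft : ∃ d ∈ D, θ0 - 2*π ≤ d ∧ d ≤ θ0 := by
      set k := ⌊(θ0 - d0)/(2*π)⌋ with hk
      have hk1 : (k:ℝ) ≤ (θ0 - d0)/(2*π) := Int.floor_le _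
      have hk2 : (θ0 - d0)/(2*π) < k + 1 := Int.lt_floor_add_one _
      rw [le_div_iff₀ h2π] at hk1
      rw [div_lt_iff₀ h2π] at hk2
      refine ⟨d0 + 2*π*k, (hDper k d0).2 hd0, by linarith, by linarith⟩
    have hdright : ∃ d ∈ D, θ0 ≤ d ∧ d ≤ θ0 + 2*π := by
      set k := ⌈(θ0 - d0)/(2*π)⌉ with hk
      have hk1 : (θ0 - d0)/(2*π) ≤ (k:ℝ) := Int.le_ceil _
      have hk2 : (k:ℝ) < (θ0 - d0)/(2*π) + 1 := Int.ceil_lt_add_one _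
      rw [div_le_iff₀ h2π] at hk1
      have hk2' : (k:ℝ)*(2*π) < (θ0 - d0) + 2*π := by
        rw [div_add' _ _ _ (ne_of_gt h2π)] at hk2
        rw [lt_div_iff₀ h2π] at hk2
        linarith
      refine ⟨d0 + 2*π*k, (hDper k d0).2 hd0, by linarith, by linarith⟩
    obtain ⟨dl, hdlD, hdl1, hdl2⟩ := hdleft
    obtain ⟨dr, hdrD, hdr1, hdr2⟩ := hdright
    set Dl := D ∩ Icc (θ0 - 2*π) θ0 with hDl
    set Dr := D ∩ Icc θ0 (θ0 + 2*π) with hDr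
    have hDlne : Dl.Nonempty := ⟨dl, hdlD, hdl1, hdl2⟩
    have hDrne : Dr.Nonempty := ⟨dr, hdrD, hdr1, hdr2⟩
    have hDlclosed : IsClosed Dl := hDclosed.inter isClosed_Icc
    have hDrclosed : IsClosed Dr := hDclosed.inter isClosed_Icc
    have hDlbdd : BddAbove Dl := ⟨θ0, fun x hx => hx.2.2⟩
    have hDrbdd : BddBelow Dr := ⟨θ0, fun x hx => hx.2.1⟩
    set θ2 := sSup Dl with hθ2
    set θ3 := sInf Dr with hθ3
    have hθ2mem : θ2 ∈ Dl := hDlclosed.csSup_mem hDlne hDlbdd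
    have hθ3mem : θ3 ∈ Dr := hDrclosed.csInf_mem hDrne hDrbdd
    have hθ2lt : θ2 < θ0 := lt_of_le_of_ne hθ2mem.2.2 (by
      intro h; exact hθ0 (h ▸ hθ2mem.1))
    have hθ3gt : θ0 < θ3 := lt_of_le_of_ne hθ3mem.2.1 (by
      intro h; exact hθ0 (h ▸ hθ3mem.1))
    set J := Ioo θ2 θ3 with hJ
    have hJD : ∀ θ ∈ J, θ ∉ D := by
      rintro θ ⟨hgt, hlt⟩ hθD
      rcases le_or_gt θ θ0 with h | h
      · have : θ ∈ Dl := ⟨hθD, by constructor <;> [linarith [hθ2mem.2.1]; exact h]⟩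
        have := le_csSup hDlbdd this
        linarith
      · have : θ ∈ Dr := ⟨hθD, by constructor <;> [linarith; linarith [hθ3mem.2.2]]⟩
        have := csInf_le hDrbdd this
        linarith
    have hJsub : J ⊆ A ∪ B := by
      intro θ hθ
      rcases hcover θ with h | h | h
      · exact Or.inl h
      · exact Or.inr h
      · exact absurd h (hJD θ hθ)
    rcases (isPreconnected_Ioo (a := θ2) (b := θ3)).subset_or_subset hAopen hBopen hABdisj hJsub with h | h
    · -- J ⊆ A : contradiction with L1 near θ2
      set θa := min (θ2 + α/2) ((θ2+θ3)/2) with hθa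
      have hθa1 : θ2 < θa := lt_min (by linarith) (by linarith)
      have hθa2 : θa < θ3 := lt_of_le_of_lt (min_le_right _ _) (by linarith)
      have hθaJ : θa ∈ J := ⟨hθa1, hθa2⟩
      have hthA : 0 < Gq C α θa := h hθaJ
      have hL1 := L1 hcomp hne hα1 hα2 (show SSp C α θ2 ∈ C from hθ2mem.1)
        (le_of_lt hθa1) (min_le_left _ _)
      linarith
    · set θb := max (θ3 - α/2) ((θ2+θ3)/2) with hθb
      have hθb1 : θb < θ3 := max_lt (by linarith) (by linarith)
      have hθb2 : θ2 < θb := lt_of_lt_of_le (by linarith) (le_max_right _ _)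
      have hθbJ : θb ∈ J := ⟨hθb2, hθb1⟩
      have hthB : 0 < Gq' C α θb := h hθbJ
      have hL2 := L2 hcomp hne hα1 hα2 (show SSp C α θ3 ∈ C from hθ3mem.1)
        (by
          have := le_max_left (θ3 - α/2) ((θ2+θ3)/2)
          linarith)
        (le_of_lt hθb1)
      linarith

end Main

lemma smul_helper (a p q : ℝ) (u w : E2) : (a•u + p•w) - (a•u + q•w) = (p - q)•w := by
  rw [sub_smul]; abel

end  -- close the noncomputable section before the pinned statement

open scoped RealInnerProductSpace

/-- The line through `S` and `P` is a supporting (tangent) line of the convex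
body `C`, touching it at `P`. -/
def IsTangentAt (C : Set (EuclideanSpace ℝ (Fin 2)))
    (S P : EuclideanSpace ℝ (Fin 2)) : Prop :=
  P ∈ C ∧ ∃ f : EuclideanSpace ℝ (Fin 2) →ₗ[ℝ] ℝ,
    f ≠ 0 ∧ f S = f P ∧ ∀ x ∈ C, f x ≤ f P

/-- Every compact convex body `C` in the plane has an isosceles cap of any
prescribed angle `α ∈ (0, π)`: there are an exterior point `S` and touching
points `P`, `Q` of the two supporting lines through `S` such that the cap
angle at `S` is `α` (i.e. `∠ P S Q = π - α`) and `|SP| = |SQ|`. -/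
theorem exists_isosceles_cap_of_angle
    (C : Set (EuclideanSpace ℝ (Fin 2)))
    (hcomp : IsCompact C) (hconv : Convex ℝ C)
    (hint : (interior C).Nonempty)
    (α : ℝ) (hα : α ∈ Set.Ioo 0 Real.pi) :
    ∃ (S P Q : EuclideanSpace ℝ (Fin 2)), S ∉ C ∧
      IsTangentAt C S P ∧ IsTangentAt C S Q ∧
      EuclideanGeometry.angle P S Q = Real.pi - α ∧
      dist S P = dist S Q := by
  obtain ⟨hα1, hα2⟩ := hα
  have hne : C.Nonempty := ⟨hint.choose, interior_subset hint.choose_spec⟩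
  have hs := sin_alpha_pos hα1 hα2
  obtain ⟨θ, hgood1, hgood2, hgood3⟩ := exists_good hcomp hconv hne hα1 hα2 hint
  have hsXY := sXf_le_sYf hcomp hne θ
  have hsXY' := sXf_le_sYf hcomp hne (θ+α)
  have hGq2 : bb C α θ - sYf C θ ≤ sYf C (θ+α) - dd C α θ := by
    unfold Gq at hgood2; linarith
  have hGq3 : sXf C (θ+α) - dd C α θ ≤ bb C α θ - sXf C θ := by
    unfold Gq' at hgood3; linarith
  set t := max (bb C α θ - sYf C θ) (sXf C (θ+α) - dd C α θ) with ht
  have ht0 : 0 < t := lt_of_lt_of_le (by linarith) (le_max_left _ _)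
  have htmax1 : bb C α θ - sYf C θ ≤ t := le_max_left _ _
  have htmax2 : sXf C (θ+α) - dd C α θ ≤ t := le_max_right _ _
  have htb : t ≤ bb C α θ - sXf C θ := max_le (by linarith) hGq3
  have hty : t ≤ sYf C (θ+α) - dd C α θ := max_le hGq2 (by linarith)
  obtain ⟨P, hP, heP⟩ := exists_face_coord hcomp hconv hne (θ := θ) (p := bb C α θ - t)
    (by linarith) (by linarith)
  obtain ⟨Q, hQ, heQ⟩ := exists_face_coord hcomp hconv hne (θ := θ+α) (p := dd C α θ + t)
    (by linarith) (by linarith)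
  have eP : P = hS C θ • uv θ + (bb C α θ - t) • uw θ := by
    rw [mem_face_decomp hcomp hP, heP]
  have eQ : Q = hS C (θ+α) • uv (θ+α) + (dd C α θ + t) • uw (θ+α) := by
    rw [mem_face_decomp hcomp hQ, heQ]
  have eS : SSp C α θ = hS C θ • uv θ + bb C α θ • uw θ := rfl
  have eS' : SSp C α θ = hS C (θ+α) • uv (θ+α) + dd C α θ • uw (θ+α) := by
    conv_lhs => rw [decomp (θ+α) (SSp C α θ)]
    rw [inner_uvα_SSp hα1 hα2, inner_uwα_SSp hα1 hα2]
  have hPS : P - SSp C α θ = (-t) • uw θ := by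
    rw [eP]
    conv_lhs => rw [eS]
    rw [smul_helper]
    congr 1
    ring
  have hQS : Q - SSp C α θ = t • uw (θ+α) := by
    rw [eQ]
    conv_lhs => rw [eS']
    rw [smul_helper]
    congr 1
    ring
  refine ⟨SSp C α θ, P, Q, ?_, ?_, ?_, ?_, ?_⟩
  · intro hmem
    have := (SSp_mem_iff hcomp hconv hne hα1 hα2).1 hmem
    linarith
  · refine ⟨hP.1, (innerSL ℝ (uv θ)).toLinearMap, ?_, ?_, ?_⟩
    · intro h0
      have h1 : ((innerSL ℝ (uv θ)).toLinearMap) (uv θ) = 0 := by rw [h0]; rfl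
      have h2 : ((innerSL ℝ (uv θ)).toLinearMap) (uv θ) = 1 := by
        show ⟪uv θ, uv θ⟫ = 1
        rw [inner_uv_uv]; simp
      rw [h1] at h2; norm_num at h2
    · show ⟪uv θ, SSp C α θ⟫ = ⟪uv θ, P⟫
      rw [inner_uv_SSp, hP.2]
    · intro x hx
      show ⟪uv θ, x⟫ ≤ ⟪uv θ, P⟫
      rw [hP.2]
      exact hS_le hcomp hx
  · refine ⟨hQ.1, (innerSL ℝ (uv (θ+α))).toLinearMap, ?_, ?_, ?_⟩
    · intro h0
      have h1 : ((innerSL ℝ (uv (θ+α))).toLinearMap) (uv (θ+α)) = 0 := by rw [h0]; rfl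
      have h2 : ((innerSL ℝ (uv (θ+α))).toLinearMap) (uv (θ+α)) = 1 := by
        show ⟪uv (θ+α), uv (θ+α)⟫ = 1
        rw [inner_uv_uv]; simp
      rw [h1] at h2; norm_num at h2
    · show ⟪uv (θ+α), SSp C α θ⟫ = ⟪uv (θ+α), Q⟫
      rw [inner_uvα_SSp hα1 hα2, hQ.2]
    · intro x hx
      show ⟪uv (θ+α), x⟫ ≤ ⟪uv (θ+α), Q⟫
      rw [hQ.2]
      exact hS_le hcomp hx
  · rw [EuclideanGeometry.angle, vsub_eq_sub, vsub_eq_sub, hPS, hQS]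
    rw [InnerProductGeometry.angle]
    have hinner : ⟪(-t) • uw θ, t • uw (θ+α)⟫ = -t * t * Real.cos α := by
      rw [real_inner_smul_left, real_inner_smul_right, inner_uw_uw,
        show θ + α - θ = α by ring]
      ring
    have hn1 : ‖(-t) • uw θ‖ = t := by
      rw [norm_smul, norm_uw, Real.norm_eq_abs, abs_neg, abs_of_pos ht0, mul_one]
    have hn2 : ‖t • uw (θ+α)‖ = t := by
      rw [norm_smul, norm_uw, Real.norm_eq_abs, abs_of_pos ht0, mul_one]
    rw [hinner, hn1, hn2]
    have hratio : -t * t * Real.cos α / (t * t) = -Real.cos α := by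
      field_simp
    rw [hratio, Real.arccos_neg, Real.arccos_cos (le_of_lt hα1) (le_of_lt hα2)]
  · rw [dist_eq_norm, dist_eq_norm, ← neg_sub P, ← neg_sub Q, norm_neg, norm_neg, hPS, hQS]
    rw [norm_smul, norm_smul, norm_uw, norm_uw, Real.norm_eq_abs, Real.norm_eq_abs, abs_neg]
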